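/- Let N ≥ 1, let a₁,…,a_N ∈ ℂ with |a_k| ≤ 1, and let s₁,…,s_N be reals with s_k ≥ 1. Then for every z on the unit circle with z ≠ a_k for all k: Re( Σ_{k=1}^N s_k·z/(z−a_k) ) ≥ (Σ_{k=1}^N s_k)/2; in particular |Σ_{k=1}^N s_k/(z−a_k)| ≥ (Σ_{k=1}^N s_k)/2, so that Π_k |z−a_k|^{s_k} · |Σ_k s_k/(z−a_k)| ≥ ((Σ_k s_k)/2) · Π_k |z−a_k|^{s_k}. -/

import Mathlib

lemma half_le_re_div_circle (a z : ℂ) (ha : ‖a‖ ≤ 1) (hz : ‖z‖ = 1)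
    (hne : z ≠ a) : (1:ℝ)/2 ≤ (z / (z - a)).re := by
  have hd : 0 < Complex.normSq (z - a) := by
    rw [Complex.normSq_pos]; exact sub_ne_zero.mpr hne
  have h1 : Complex.normSq z = 1 := by
    rw [Complex.normSq_eq_norm_sq, hz]; norm_num
  have h2 : Complex.normSq a ≤ 1 := by
    rw [Complex.normSq_eq_norm_sq]
    nlinarith [norm_nonneg a]
  rw [Complex.div_re, ← add_div, le_div_iff₀ hd]
  simp only [Complex.normSq_apply, Complex.sub_re, Complex.sub_im] at *
  nlinarith

theorem turan_lower_bound_powers (N : ℕ) (hN : 1 ≤ N) (a : Fin N → ℂ)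
    (ha : ∀ k, ‖a k‖ ≤ 1) (s : Fin N → ℝ) (hs : ∀ k, 1 ≤ s k)
    (z : ℂ) (hz : ‖z‖ = 1) (hza : ∀ k, z ≠ a k) :
    (∑ k, s k) / 2 ≤ (∑ k, (s k : ℂ) * z / (z - a k)).re ∧
    (∑ k, s k) / 2 ≤ ‖∑ k, (s k : ℂ) / (z - a k)‖ ∧
    ((∑ k, s k) / 2) * ∏ k, ‖z - a k‖ ^ s k ≤
      (∏ k, ‖z - a k‖ ^ s k) * ‖∑ k, (s k : ℂ) / (z - a k)‖ := by
  have key : ∀ k, (1:ℝ)/2 ≤ (z / (z - a k)).re :=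
    fun k => half_le_re_div_circle (a k) z (ha k) hz (hza k)
  have hre : (∑ k, (s k : ℂ) * z / (z - a k)).re
      = ∑ k, s k * (z / (z - a k)).re := by
    rw [Complex.re_sum]
    refine Finset.sum_congr rfl fun k _ => ?_
    rw [mul_div_assoc]
    simp
  have h1 : (∑ k, s k) / 2 ≤ (∑ k, (s k : ℂ) * z / (z - a k)).re := by
    rw [hre, Finset.sum_div]
    refine Finset.sum_le_sum fun k _ => ?_
    have hk0 : (0:ℝ) ≤ s k := le_trans zero_le_one (hs k)
    calc s k / 2 = s k * (1/2) := by ring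
    _ ≤ s k * (z / (z - a k)).re := by
        exact mul_le_mul_of_nonneg_left (key k) hk0
  have hfac : (∑ k, (s k : ℂ) * z / (z - a k)) = z * ∑ k, (s k : ℂ) / (z - a k) := by
    rw [Finset.mul_sum]
    exact Finset.sum_congr rfl fun k _ => by ring
  have h2 : (∑ k, s k) / 2 ≤ ‖∑ k, (s k : ℂ) / (z - a k)‖ := by
    calc (∑ k, s k) / 2 ≤ (∑ k, (s k : ℂ) * z / (z - a k)).re := h1
    _ ≤ ‖∑ k, (s k : ℂ) * z / (z - a k)‖ := Complex.re_le_norm _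
    _ = ‖∑ k, (s k : ℂ) / (z - a k)‖ := by rw [hfac, norm_mul, hz, one_mul]
  refine ⟨h1, h2, ?_⟩
  have hp : 0 ≤ ∏ k, ‖z - a k‖ ^ s k :=
    Finset.prod_nonneg fun k _ => Real.rpow_nonneg (norm_nonneg _) _
  calc ((∑ k, s k) / 2) * ∏ k, ‖z - a k‖ ^ s k
      = (∏ k, ‖z - a k‖ ^ s k) * ((∑ k, s k) / 2) := by ring
  _ ≤ (∏ k, ‖z - a k‖ ^ s k) * ‖∑ k, (s k : ℂ) / (z - a k)‖ :=
      mul_le_mul_of_nonneg_left h2 hp
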